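/- arXiv:1707.00796 — 2 statements merged into one kernel-verified Lean document; each statement's English description precedes it below -/
import Mathlib

section
/- Let X, Z_i, Z_N, Z_R be random variables taking values in finite measurable spaces on a probability space (Ω, μ), and assume the measurements are conditionally independent of the remaining measurements given the target, in the sense that I[⟨Z_i, Z_N⟩ : Z_R | X] = 0. Then the approximation error of the local utility simplifies to I[X : Z_i | Z_N] − I[X : Z_i | ⟨Z_N, Z_R⟩] = (I[X : ⟨Z_N, Z_R⟩] − I[X : Z_N] − I[X : Z_R]) + I[⟨Z_i, Z_N⟩ : Z_R]. -/
open MeasureTheory ProbabilityTheory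

/-- Shannon entropy of a random variable with values in a finite measurable space. -/
noncomputable def entropy {Ω S : Type*} [MeasurableSpace Ω] [Fintype S] [MeasurableSpace S]
    (X : Ω → S) (μ : Measure Ω) : ℝ :=
  ∑ x : S, Real.negMulLog ((μ.map X) {x}).toReal

/-- Conditional entropy H[X | Y]. -/
noncomputable def condEntropy {Ω S T : Type*} [MeasurableSpace Ω] [Fintype S] [MeasurableSpace S]
    [Fintype T] [MeasurableSpace T] (X : Ω → S) (Y : Ω → T) (μ : Measure Ω) : ℝ :=
  ∑ y : T, ((μ.map Y) {y}).toReal * entropy X (ProbabilityTheory.cond μ (Y ⁻¹' {y}))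

/-- Mutual information I[X : Y]. -/
noncomputable def mutualInfo {Ω S T : Type*} [MeasurableSpace Ω] [Fintype S] [MeasurableSpace S]
    [Fintype T] [MeasurableSpace T] (X : Ω → S) (Y : Ω → T) (μ : Measure Ω) : ℝ :=
  entropy X μ + entropy Y μ - entropy (fun ω => (X ω, Y ω)) μ

/-- Conditional mutual information I[X : Y | Z]. -/
noncomputable def condMutualInfo {Ω S T U : Type*} [MeasurableSpace Ω] [Fintype S]
    [MeasurableSpace S] [Fintype T] [MeasurableSpace T] [Fintype U] [MeasurableSpace U]
    (X : Ω → S) (Y : Ω → T) (Z : Ω → U) (μ : Measure Ω) : ℝ :=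
  ∑ z : U, ((μ.map Z) {z}).toReal * mutualInfo X Y (ProbabilityTheory.cond μ (Z ⁻¹' {z}))


section Aux

variable {Ω : Type*} [MeasurableSpace Ω]

lemma map_sing {S : Type*} [MeasurableSpace S] [MeasurableSingletonClass S]
    (μ : Measure Ω) {W : Ω → S} (hW : Measurable W) (w : S) :
    (μ.map W) {w} = μ (W ⁻¹' {w}) :=
  Measure.map_apply hW (measurableSet_singleton w)

lemma sum_toReal_preimage {S : Type*} [Fintype S] [MeasurableSpace S] [MeasurableSingletonClass S]
    (ν : Measure Ω) [IsFiniteMeasure ν] {W : Ω → S} (hW : Measurable W) :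
    ∑ w : S, (ν (W ⁻¹' {w})).toReal = (ν Set.univ).toReal := by
  rw [← ENNReal.toReal_sum (fun a _ => measure_ne_top ν _)]
  congr 1
  rw [sum_measure_preimage_singleton Finset.univ (fun y _ => hW (measurableSet_singleton y))]
  simp

lemma entropy_pair_eq {S T : Type*} [Fintype S] [MeasurableSpace S] [MeasurableSingletonClass S]
    [Fintype T] [MeasurableSpace T] [MeasurableSingletonClass T]
    (μ : Measure Ω) [IsProbabilityMeasure μ] {W : Ω → S} {Z : Ω → T}
    (hW : Measurable W) (hZ : Measurable Z) :
    entropy (fun ω => (W ω, Z ω)) μ = condEntropy W Z μ + entropy Z μ := by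
  have hWZ : Measurable (fun ω => (W ω, Z ω)) := hW.prodMk hZ
  rw [entropy, condEntropy, entropy, ← Finset.sum_add_distrib, Fintype.sum_prod_type,
    Finset.sum_comm]
  refine Finset.sum_congr rfl fun z _ => ?_
  have hpre : ∀ w : S, (fun ω => (W ω, Z ω)) ⁻¹' {(w, z)} = W ⁻¹' {w} ∩ Z ⁻¹' {z} := by
    intro w; ext ω; simp [Prod.ext_iff]
  by_cases h0 : μ (Z ⁻¹' {z}) = 0
  · have hz : ∀ w : S, μ ((fun ω => (W ω, Z ω)) ⁻¹' {(w, z)}) = 0 := fun w => by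
      rw [hpre w]; exact measure_mono_null Set.inter_subset_right h0
    have hc : (μ[|Z ⁻¹' {z}]) = 0 := by
      simp [ProbabilityTheory.cond, h0]
    simp [map_sing μ hWZ, map_sing μ hZ, hz, h0, hc, entropy]
  · have hP : IsProbabilityMeasure (μ[|Z ⁻¹' {z}]) :=
      ProbabilityTheory.cond_isProbabilityMeasure h0
    set p : ℝ := (μ (Z ⁻¹' {z})).toReal with hp
    have hpne : p ≠ 0 := by
      simp [hp, ENNReal.toReal_eq_zero_iff, h0, measure_ne_top μ _]
    have key : ∀ w : S, ((μ.map fun ω => (W ω, Z ω)) {(w, z)}).toReal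
        = p * (((μ[|Z ⁻¹' {z}]).map W) {w}).toReal := by
      intro w
      rw [map_sing μ hWZ, hpre w, map_sing _ hW,
        ProbabilityTheory.cond_apply (hZ (measurableSet_singleton z)),
        ENNReal.toReal_mul, ENNReal.toReal_inv, Set.inter_comm]
      rw [← mul_assoc, mul_inv_cancel₀ hpne, one_mul]
    have hsum1 : ∑ w : S, (((μ[|Z ⁻¹' {z}]).map W) {w}).toReal = 1 := by
      have := sum_toReal_preimage (μ[|Z ⁻¹' {z}]) hW
      simp only [map_sing (μ[|Z ⁻¹' {z}]) hW]
      rw [this]; simp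
    calc ∑ w : S, Real.negMulLog ((μ.map fun ω => (W ω, Z ω)) {(w, z)}).toReal
        = ∑ w : S, ((((μ[|Z ⁻¹' {z}]).map W) {w}).toReal * Real.negMulLog p
            + p * Real.negMulLog (((μ[|Z ⁻¹' {z}]).map W) {w}).toReal) := by
          refine Finset.sum_congr rfl fun w _ => ?_
          rw [key w, Real.negMulLog_mul]
      _ = Real.negMulLog p + p * entropy W (μ[|Z ⁻¹' {z}]) := by
          rw [Finset.sum_add_distrib, ← Finset.sum_mul, hsum1, one_mul, ← Finset.mul_sum, entropy]
      _ = ((μ.map Z) {z}).toReal * entropy W (μ[|Z ⁻¹' {z}])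
            + Real.negMulLog ((μ.map Z) {z}).toReal := by
          rw [map_sing μ hZ]; ring

lemma condMutualInfo_eq {S T U : Type*} [Fintype S] [MeasurableSpace S] [MeasurableSingletonClass S]
    [Fintype T] [MeasurableSpace T] [MeasurableSingletonClass T]
    [Fintype U] [MeasurableSpace U] [MeasurableSingletonClass U]
    (μ : Measure Ω) [IsProbabilityMeasure μ] {X : Ω → S} {Y : Ω → T} {Z : Ω → U}
    (hX : Measurable X) (hY : Measurable Y) (hZ : Measurable Z) :
    condMutualInfo X Y Z μ = entropy (fun ω => (X ω, Z ω)) μ + entropy (fun ω => (Y ω, Z ω)) μ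
      - entropy (fun ω => ((X ω, Y ω), Z ω)) μ - entropy Z μ := by
  have h1 := entropy_pair_eq μ hX hZ
  have h2 := entropy_pair_eq μ hY hZ
  have h3 : entropy (fun ω => ((X ω, Y ω), Z ω)) μ
      = condEntropy (fun ω => (X ω, Y ω)) Z μ + entropy Z μ :=
    entropy_pair_eq μ (hX.prodMk hY) hZ
  have h4 : condMutualInfo X Y Z μ
      = condEntropy X Z μ + condEntropy Y Z μ - condEntropy (fun ω => (X ω, Y ω)) Z μ := by
    rw [condMutualInfo, condEntropy, condEntropy, condEntropy]
    simp only [mutualInfo, mul_add, mul_sub]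
    rw [Finset.sum_sub_distrib, Finset.sum_add_distrib]
  linarith

lemma entropy_comp {S T : Type*} [Fintype S] [MeasurableSpace S] [MeasurableSingletonClass S]
    [Fintype T] [MeasurableSpace T] [MeasurableSingletonClass T]
    (μ : Measure Ω) {W : Ω → S} (hW : Measurable W) (f : S → T) (hf : Function.Injective f) :
    entropy (f ∘ W) μ = entropy W μ := by
  classical
  have hfm : Measurable f := measurable_of_countable f
  rw [entropy, entropy]
  have key : ∀ t, (μ.map (f ∘ W)) {t} = μ (W ⁻¹' (f ⁻¹' {t})) := fun t => by
    rw [map_sing μ (hfm.comp hW) t]; rfl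
  rw [← Finset.sum_subset (Finset.subset_univ (Finset.univ.image f))]
  · rw [Finset.sum_image (fun a _ b _ h => hf h)]
    refine Finset.sum_congr rfl fun w _ => ?_
    rw [key, map_sing μ hW]
    have hpw : f ⁻¹' {f w} = {w} := by ext x; simp [hf.eq_iff]
    rw [hpw]
  · intro t _ ht
    have : f ⁻¹' {t} = ∅ := by
      ext s
      simp only [Set.mem_preimage, Set.mem_singleton_iff, Set.mem_empty_iff_false, iff_false]
      intro h; exact ht (Finset.mem_image.mpr ⟨s, Finset.mem_univ s, h⟩)
    simp [key, this]

end Aux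

/-- Remark 1: if the measurements are conditionally independent of the remaining measurements
given the target, i.e. `I[⟨Zi, ZN⟩ : ZR | X] = 0`, the approximation error simplifies to
`I[X : Zi | ZN] − I[X : Zi | ⟨ZN, ZR⟩]
  = (I[X : ⟨ZN, ZR⟩] − I[X : ZN] − I[X : ZR]) + I[⟨Zi, ZN⟩ : ZR]`. -/
theorem approx_local_utility_error_cond_indep
    {Ω 𝒳 𝒵i 𝒵N 𝒵R : Type*} [MeasurableSpace Ω]
    [Fintype 𝒳] [MeasurableSpace 𝒳] [MeasurableSingletonClass 𝒳]
    [Fintype 𝒵i] [MeasurableSpace 𝒵i] [MeasurableSingletonClass 𝒵i]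
    [Fintype 𝒵N] [MeasurableSpace 𝒵N] [MeasurableSingletonClass 𝒵N]
    [Fintype 𝒵R] [MeasurableSpace 𝒵R] [MeasurableSingletonClass 𝒵R]
    (μ : Measure Ω) [IsProbabilityMeasure μ]
    (X : Ω → 𝒳) (Zi : Ω → 𝒵i) (ZN : Ω → 𝒵N) (ZR : Ω → 𝒵R)
    (hX : Measurable X) (hZi : Measurable Zi) (hZN : Measurable ZN) (hZR : Measurable ZR)
    (hindep : condMutualInfo (fun ω => (Zi ω, ZN ω)) ZR X μ = 0) :
    condMutualInfo X Zi ZN μ - condMutualInfo X Zi (fun ω => (ZN ω, ZR ω)) μ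
      = (mutualInfo X (fun ω => (ZN ω, ZR ω)) μ - mutualInfo X ZN μ - mutualInfo X ZR μ)
        + mutualInfo (fun ω => (Zi ω, ZN ω)) ZR μ := by
  have e1 : condMutualInfo X Zi ZN μ = entropy (fun ω => (X ω, ZN ω)) μ
      + entropy (fun ω => (Zi ω, ZN ω)) μ - entropy (fun ω => ((X ω, Zi ω), ZN ω)) μ
      - entropy ZN μ := condMutualInfo_eq μ hX hZi hZN
  have e2 : condMutualInfo X Zi (fun ω => (ZN ω, ZR ω)) μ
      = entropy (fun ω => (X ω, (ZN ω, ZR ω))) μ + entropy (fun ω => (Zi ω, (ZN ω, ZR ω))) μ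
      - entropy (fun ω => ((X ω, Zi ω), (ZN ω, ZR ω))) μ - entropy (fun ω => (ZN ω, ZR ω)) μ :=
    condMutualInfo_eq μ hX hZi (hZN.prodMk hZR)
  have e3 : entropy (fun ω => ((Zi ω, ZN ω), X ω)) μ + entropy (fun ω => (ZR ω, X ω)) μ
      - entropy (fun ω => (((Zi ω, ZN ω), ZR ω), X ω)) μ - entropy X μ = 0 := by
    rw [← condMutualInfo_eq μ (hZi.prodMk hZN) hZR hX]; exact hindep
  have i1 : entropy (fun ω => ((Zi ω, ZN ω), X ω)) μ
      = entropy (fun ω => ((X ω, Zi ω), ZN ω)) μ :=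
    entropy_comp μ ((hX.prodMk hZi).prodMk hZN)
      (fun p => ((p.1.2, p.2), p.1.1))
      (by rintro ⟨⟨a, b⟩, c⟩ ⟨⟨d, e⟩, g⟩ h
          simp only [Prod.mk.injEq] at h ⊢; tauto)
  have i2 : entropy (fun ω => (ZR ω, X ω)) μ = entropy (fun ω => (X ω, ZR ω)) μ :=
    entropy_comp μ (hX.prodMk hZR) Prod.swap Prod.swap_injective
  have i3 : entropy (fun ω => (((Zi ω, ZN ω), ZR ω), X ω)) μ
      = entropy (fun ω => ((X ω, Zi ω), (ZN ω, ZR ω))) μ :=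
    entropy_comp μ ((hX.prodMk hZi).prodMk (hZN.prodMk hZR))
      (fun p => (((p.1.2, p.2.1), p.2.2), p.1.1))
      (by rintro ⟨⟨a, b⟩, c, d⟩ ⟨⟨e, g⟩, k, l⟩ h
          simp only [Prod.mk.injEq] at h ⊢; tauto)
  have i4 : entropy (fun ω => (Zi ω, (ZN ω, ZR ω))) μ
      = entropy (fun ω => ((Zi ω, ZN ω), ZR ω)) μ :=
    entropy_comp μ ((hZi.prodMk hZN).prodMk hZR)
      (fun p => (p.1.1, (p.1.2, p.2)))
      (by rintro ⟨⟨a, b⟩, c⟩ ⟨⟨d, e⟩, g⟩ h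
          simp only [Prod.mk.injEq] at h ⊢; tauto)
  simp only [mutualInfo]
  linarith
end

section
/- Let ι be a finite type of players, for each i ∈ ι let S i be a nonempty finite strategy set, let X be a random variable with values in a finite measurable space on a probability space (Ω, μ), and for each player i and each action s_i ∈ S i let Z i s_i be a random variable with values in a finite measurable space (the measurement taken at sensing location s_i). Define the local utility U i s = I[X : Z i (s i) | ⟨Z j (s j)⟩_{j ≠ i}] (conditional mutual information given the joint measurement of all other players' selections) and the global objective φ s = I[X : ⟨Z j (s j)⟩_{j ∈ ι}] (mutual information with the joint measurement of all players' selections). Then φ is a potential function for U: for every player i, all actions s_i', s_i'' ∈ S i, and every profile s, U i (s_i', s_{-i}) − U i (s_i'', s_{-i}) = φ (s_i', s_{-i}) − φ (s_i'', s_{-i}). -/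
open MeasureTheory ProbabilityTheory

section helpers
variable {Ω A B T : Type*} [MeasurableSpace Ω]
  [Fintype A] [MeasurableSpace A] [MeasurableSingletonClass A]
  [Fintype B] [MeasurableSpace B] [MeasurableSingletonClass B]
  [Fintype T] [MeasurableSpace T] [MeasurableSingletonClass T]
  {μ : Measure Ω} [IsProbabilityMeasure μ]

omit [Fintype A] [IsProbabilityMeasure μ] in
lemma map_singleton (X : Ω → A) (hX : Measurable X) (a : A) :
    (μ.map X) {a} = μ (X ⁻¹' {a}) :=
  Measure.map_apply hX (measurableSet_singleton a)

omit [IsProbabilityMeasure μ] in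
lemma sum_fiber (X : Ω → A) (hX : Measurable X) (s : Set Ω) (hs : MeasurableSet s) :
    ∑ a : A, μ (s ∩ X ⁻¹' {a}) = μ s := by
  rw [← measure_biUnion_finset]
  · congr 1
    ext ω
    simp
  · intro a _ b _ hab
    simp only [Function.onFun, Set.disjoint_left]
    rintro ω ⟨-, ha⟩ ⟨-, hb⟩
    exact hab (by simp_all)
  · exact fun a _ => hs.inter (hX (measurableSet_singleton a))

lemma negMulLog_div_aux {p q : ℝ} (hp : 0 ≤ p) (hq : 0 < q) :
    q * Real.negMulLog (p / q) = Real.negMulLog p + p * Real.log q := by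
  rcases eq_or_lt_of_le hp with h | hp'
  · simp [← h]
  · rw [Real.negMulLog, Real.negMulLog, Real.log_div (ne_of_gt hp') (ne_of_gt hq)]
    field_simp
    ring

/-- Chain rule: H(A | Y) = H(A, Y) - H(Y). -/
lemma condEntropy_eq (X : Ω → A) (hX : Measurable X) (Y : Ω → T) (hY : Measurable Y) :
    condEntropy X Y μ = entropy (fun ω => (X ω, Y ω)) μ - entropy Y μ := by
  have hXY : Measurable fun ω => (X ω, Y ω) := hX.prodMk hY
  have hpair : entropy (fun ω => (X ω, Y ω)) μ
      = ∑ t : T, ∑ a : A, Real.negMulLog (μ (Y ⁻¹' {t} ∩ X ⁻¹' {a})).toReal := by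
    rw [entropy, Fintype.sum_prod_type_right]
    refine Finset.sum_congr rfl fun t _ => Finset.sum_congr rfl fun a _ => ?_
    rw [map_singleton _ hXY]
    have : (fun ω => (X ω, Y ω)) ⁻¹' {(a, t)} = Y ⁻¹' {t} ∩ X ⁻¹' {a} := by
      ext ω
      simp [Prod.ext_iff, and_comm]
    rw [this]
  rw [hpair, condEntropy, entropy, ← Finset.sum_sub_distrib]
  refine Finset.sum_congr rfl fun t _ => ?_
  rw [map_singleton Y hY]
  set s := Y ⁻¹' {t} with hs
  have hms : MeasurableSet s := hY (measurableSet_singleton t)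
  by_cases h0 : μ s = 0
  · have hz : ∀ a : A, μ (s ∩ X ⁻¹' {a}) = 0 := fun a =>
      measure_mono_null (Set.inter_subset_left) h0
    simp [h0, hz]
  · have hfin : μ s ≠ ⊤ := measure_ne_top μ s
    have hq : 0 < (μ s).toReal := ENNReal.toReal_pos h0 hfin
    have hcond : ∀ a : A, ((cond μ s).map X {a}).toReal
        = (μ (s ∩ X ⁻¹' {a})).toReal / (μ s).toReal := by
      intro a
      rw [map_singleton X hX, cond_apply hms, ENNReal.toReal_mul, ENNReal.toReal_inv,
        div_eq_inv_mul]
    have hsum : ∑ a : A, (μ (s ∩ X ⁻¹' {a})).toReal = (μ s).toReal := by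
      rw [← ENNReal.toReal_sum (fun a _ => measure_ne_top μ _)]
      congr 1
      exact sum_fiber X hX s hms
    rw [entropy, Finset.mul_sum]
    have key : ∀ a : A, (μ s).toReal * Real.negMulLog (((cond μ s).map X {a}).toReal)
        = Real.negMulLog (μ (s ∩ X ⁻¹' {a})).toReal
          + (μ (s ∩ X ⁻¹' {a})).toReal * Real.log (μ s).toReal := by
      intro a
      rw [hcond a]
      exact negMulLog_div_aux ENNReal.toReal_nonneg hq
    rw [Finset.sum_congr rfl (fun a _ => key a), Finset.sum_add_distrib,
      ← Finset.sum_mul, hsum, Real.negMulLog]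
    ring

/-- Entropy is invariant under composing with an injection. -/
lemma entropy_comp_inj (X : Ω → A) (hX : Measurable X) (f : A → B)
    (hf : Function.Injective f) :
    entropy (f ∘ X) μ = entropy X μ := by
  classical
  have hf' : Measurable f := measurable_of_countable f
  have key : ∀ a : A, (μ.map (f ∘ X)) {f a} = (μ.map X) {a} := by
    intro a
    rw [map_singleton _ (hf'.comp hX), map_singleton _ hX]
    congr 1
    ext ω
    simp [hf.eq_iff]
  symm
  calc entropy X μ = ∑ a : A, Real.negMulLog ((μ.map (f ∘ X)) {f a}).toReal := by
        rw [entropy]; exact Finset.sum_congr rfl fun a _ => by rw [key]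
    _ = ∑ b ∈ Finset.univ.image f, Real.negMulLog ((μ.map (f ∘ X)) {b}).toReal := by
        rw [Finset.sum_image (fun x _ y _ h => hf h)]
    _ = ∑ b : B, Real.negMulLog ((μ.map (f ∘ X)) {b}).toReal := by
        refine Finset.sum_subset (Finset.subset_univ _) fun b _ hb => ?_
        have he : (f ∘ X) ⁻¹' {b} = ∅ := by
          ext ω
          simp only [Set.mem_preimage, Set.mem_singleton_iff, Set.mem_empty_iff_false,
            iff_false]
          intro h
          exact hb (Finset.mem_image.2 ⟨X ω, Finset.mem_univ _, h⟩)
        rw [map_singleton _ (hf'.comp hX), he]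
        simp

/-- CMI in terms of conditional entropies. -/
lemma condMutualInfo_eq_s9 (X : Ω → A) (Y : Ω → B) (W : Ω → T) :
    condMutualInfo X Y W μ = condEntropy X W μ + condEntropy Y W μ
      - condEntropy (fun ω => (X ω, Y ω)) W μ := by
  simp only [condMutualInfo, mutualInfo, condEntropy, mul_add, mul_sub,
    Finset.sum_add_distrib, Finset.sum_sub_distrib]

/-- Key: CMI given W equals I(X; (Y,W)) - I(X; W), for measurable everything. -/
lemma condMutualInfo_chain (X : Ω → A) (hX : Measurable X) (Y : Ω → B) (hY : Measurable Y)
    (W : Ω → T) (hW : Measurable W) :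
    condMutualInfo X Y W μ
      = mutualInfo X (fun ω => (Y ω, W ω)) μ - mutualInfo X W μ := by
  have h1 := condEntropy_eq (μ := μ) X hX W hW
  have h2 := condEntropy_eq (μ := μ) Y hY W hW
  have h3 := condEntropy_eq (μ := μ) (fun ω => (X ω, Y ω)) (hX.prodMk hY) W hW
  rw [condMutualInfo_eq_s9, h1, h2, h3, mutualInfo, mutualInfo]
  have e1 : entropy (fun ω => (X ω, (Y ω, W ω))) μ
      = entropy (fun ω => ((X ω, Y ω), W ω)) μ := by
    have := entropy_comp_inj (μ := μ) (fun ω => (X ω, (Y ω, W ω)))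
      (hX.prodMk (hY.prodMk hW)) (fun p => ((p.1, p.2.1), p.2.2))
      (fun p q h => by
        simp only [Prod.mk.injEq] at h
        exact Prod.ext h.1.1 (Prod.ext h.1.2 h.2))
    rw [← this]
    rfl
  rw [e1]
  ring

end helpers

/-- The sensor-planning game with local utilities
`U i s = I[X : Z i (s i) | ⟨Z j (s j)⟩_{j ≠ i}]` is a potential game with potential
`φ s = I[X : ⟨Z j (s j)⟩_{j ∈ ι}]`: unilateral utility differences equal potential
differences. -/
theorem sensor_planning_is_potential_game
    {ι : Type*} [Fintype ι] [DecidableEq ι]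
    {S : ι → Type*} [∀ i, Fintype (S i)] [∀ i, Nonempty (S i)]
    {Ω 𝒳 : Type*} [MeasurableSpace Ω]
    [Fintype 𝒳] [MeasurableSpace 𝒳] [MeasurableSingletonClass 𝒳]
    {𝒵 : ι → Type*} [∀ i, Fintype (𝒵 i)] [∀ i, MeasurableSpace (𝒵 i)]
    [∀ i, MeasurableSingletonClass (𝒵 i)]
    (μ : Measure Ω) [IsProbabilityMeasure μ]
    (X : Ω → 𝒳) (hX : Measurable X)
    (Z : ∀ i, S i → Ω → 𝒵 i) (hZ : ∀ i si, Measurable (Z i si))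
    (U : ∀ i : ι, (∀ j, S j) → ℝ) (φ : (∀ j, S j) → ℝ)
    (hU : ∀ (i : ι) (s : ∀ j, S j),
      U i s = condMutualInfo X (Z i (s i))
        (fun ω (j : {j : ι // j ≠ i}) => Z j.1 (s j.1) ω) μ)
    (hφ : ∀ s : ∀ j, S j, φ s = mutualInfo X (fun ω (j : ι) => Z j (s j) ω) μ) :
    ∀ (i : ι) (si' si'' : S i) (s : ∀ j, S j),
      U i (Function.update s i si') - U i (Function.update s i si'')
        = φ (Function.update s i si') - φ (Function.update s i si'') := by
  classical
  intro i si' si'' s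
  have key : ∀ t : ∀ j, S j,
      condMutualInfo X (Z i (t i)) (fun ω (j : {j : ι // j ≠ i}) => Z j.1 (t j.1) ω) μ
        = mutualInfo X (fun ω (j : ι) => Z j (t j) ω) μ
          - mutualInfo X (fun ω (j : {j : ι // j ≠ i}) => Z j.1 (t j.1) ω) μ := by
    intro t
    set T : Ω → ∀ j, 𝒵 j := fun ω j => Z j (t j) ω with hT
    have hTm : Measurable T := measurable_pi_lambda _ fun j => hZ j (t j)
    have hWm : Measurable (fun ω (j : {j : ι // j ≠ i}) => Z j.1 (t j.1) ω) :=
      measurable_pi_lambda _ fun j => hZ j.1 (t j.1)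
    rw [condMutualInfo_chain X hX (Z i (t i)) (hZ i (t i)) _ hWm]
    congr 1
    have hinj : Function.Injective
        (fun u : ∀ j, 𝒵 j => (u i, fun j : {j : ι // j ≠ i} => u j.1)) := by
      intro u v h
      simp only [Prod.mk.injEq] at h
      funext j
      by_cases hj : j = i
      · subst hj; exact h.1
      · exact congrFun h.2 ⟨j, hj⟩
    have e1 : entropy (fun ω =>
          (Z i (t i) ω, fun j : {j : ι // j ≠ i} => Z j.1 (t j.1) ω)) μ = entropy T μ :=
      entropy_comp_inj T hTm _ hinj
    have e2 : entropy (fun ω =>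
          (X ω, (Z i (t i) ω, fun j : {j : ι // j ≠ i} => Z j.1 (t j.1) ω))) μ
        = entropy (fun ω => (X ω, T ω)) μ :=
      entropy_comp_inj (fun ω => (X ω, T ω)) (hX.prodMk hTm)
        (fun p => (p.1, (p.2 i, fun j : {j : ι // j ≠ i} => p.2 j.1)))
        (fun p q h => by
          simp only [Prod.mk.injEq] at h
          exact Prod.ext h.1 (hinj (Prod.ext h.2.1 h.2.2)))
    unfold mutualInfo
    rw [← e1, ← e2]
  have hWeq : ∀ si : S i,
      (fun ω (j : {j : ι // j ≠ i}) => Z j.1 (Function.update s i si j.1) ω)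
        = (fun ω (j : {j : ι // j ≠ i}) => Z j.1 (s j.1) ω) := by
    intro si
    funext ω j
    rw [Function.update_of_ne j.2]
  have h1 := key (Function.update s i si')
  have h2 := key (Function.update s i si'')
  rw [hWeq] at h1 h2
  rw [hU, hU, hφ, hφ, hWeq si', hWeq si'', h1, h2]
  ring
end
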